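/- Let d, n ≥ 1 be integers. The number p_d(n) of lower sets in ℤ_{≥0}^d of cardinality exactly n satisfies p_d(n) ≥ C(d+n-2, n-1), the binomial coefficient (d+n-2) choose (n-1). -/
import Mathlib

/-- `Q` is a lower (downward closed) set in `ℤ_{≥0}^d`. -/
def IsLowerFinset {d : ℕ} (Q : Finset (Fin d → ℕ)) : Prop :=
  ∀ x ∈ Q, ∀ y : Fin d → ℕ, (∀ i, y i ≤ x i) → y ∈ Q

/-- The number of lower sets of cardinality `n` in `ℤ_{≥0}^d`. -/
noncomputable def numLowerSets (d n : ℕ) : ℕ :=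
  Set.ncard {Q : Finset (Fin d → ℕ) | IsLowerFinset Q ∧ Q.card = n}

/-- The staircase lower set associated to a vector `a`: the origin together with the
points `(k+1)·e_i` for `k < a i`. -/
def stair {d : ℕ} (a : Fin d → ℕ) : Finset (Fin d → ℕ) :=
  insert 0 (Finset.univ.biUnion fun i =>
    (Finset.range (a i)).image fun k => fun j => if j = i then k + 1 else 0)

lemma mem_stair {d : ℕ} (a : Fin d → ℕ) (x : Fin d → ℕ) :
    x ∈ stair a ↔ x = 0 ∨ ∃ i, 1 ≤ x i ∧ x i ≤ a i ∧ ∀ j, j ≠ i → x j = 0 := by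
  simp only [stair, Finset.mem_insert, Finset.mem_biUnion, Finset.mem_univ, true_and,
    Finset.mem_image, Finset.mem_range]
  constructor
  · rintro (h | ⟨i, k, hk, rfl⟩)
    · exact Or.inl h
    · refine Or.inr ⟨i, ?_, ?_, ?_⟩
      · simp
      · simp; omega
      · intro j hj; simp [hj]
  · rintro (h | ⟨i, h1, h2, h3⟩)
    · exact Or.inl h
    · refine Or.inr ⟨i, x i - 1, by omega, ?_⟩
      funext j
      by_cases hj : j = i
      · subst hj; simp; omega
      · simp [hj, h3 j hj]

lemma stair_lower {d : ℕ} (a : Fin d → ℕ) : IsLowerFinset (stair a) := by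
  intro x hx y hy
  rw [mem_stair] at hx ⊢
  rcases hx with rfl | ⟨i, h1, h2, h3⟩
  · left; funext j; have := hy j; simpa using this
  · by_cases hy0 : y i = 0
    · left; funext j
      by_cases hj : j = i
      · subst hj; exact hy0
      · have h4 := hy j; rw [h3 j hj] at h4; simpa using h4
    · right
      exact ⟨i, by omega, le_trans (hy i) h2, fun j hj => by
        have h4 := hy j; rw [h3 j hj] at h4; omega⟩

lemma stair_card {d : ℕ} (a : Fin d → ℕ) : (stair a).card = 1 + ∑ i, a i := by
  have h0 : (0 : Fin d → ℕ) ∉ Finset.univ.biUnion fun i =>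
      (Finset.range (a i)).image fun k => fun j => if j = i then k + 1 else 0 := by
    intro h
    simp only [Finset.mem_biUnion, Finset.mem_image, Finset.mem_range] at h
    obtain ⟨i, -, k, -, hk⟩ := h
    have := congrFun hk i
    simp at this
  have hb : (Finset.univ.biUnion fun i =>
      (Finset.range (a i)).image fun k => fun j => if j = i then k + 1 else 0).card
      = ∑ i, a i := by
    rw [Finset.card_biUnion]
    · refine Finset.sum_congr rfl fun i _ => ?_
      rw [Finset.card_image_of_injective, Finset.card_range]
      intro k l h
      have := congrFun h i
      simpa using this
    · intro i _ j _ hij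
      simp only [Finset.disjoint_left, Finset.mem_image, Finset.mem_range]
      rintro x ⟨k, hk, rfl⟩ ⟨l, hl, h⟩
      have hthis := congrFun h j
      have hji : ¬ j = i := fun he => hij he.symm
      rw [if_neg hji, if_pos rfl] at hthis
      omega
  rw [stair, Finset.card_insert_of_notMem h0, hb]
  omega

lemma stair_inj {d : ℕ} : Function.Injective (stair (d := d)) := by
  intro a b hab
  funext i
  by_contra hne
  wlog h : a i < b i generalizing a b
  · exact this hab.symm (Ne.symm hne) (by omega)
  · have hmem : (fun j => if j = i then b i else 0) ∈ stair b := by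
      rw [mem_stair]
      exact Or.inr ⟨i, by simp; omega, by simp, fun j hj => by simp [hj]⟩
    rw [← hab, mem_stair] at hmem
    rcases hmem with h0 | ⟨i', h1, h2, h3⟩
    · have := congrFun h0 i; simp at this; omega
    · by_cases hii : i' = i
      · subst hii; simp at h2; omega
      · have := h3 i (Ne.symm hii); simp at this; omega

lemma lower_mem_lt {d n : ℕ} (Q : Finset (Fin d → ℕ)) (hQ : IsLowerFinset Q)
    (hc : Q.card = n) (x : Fin d → ℕ) (hx : x ∈ Q) (i : Fin d) : x i < n := by
  have hsub : (Fintype.piFinset fun j => Finset.range (x j + 1)) ⊆ Q := by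
    intro y hy
    rw [Fintype.mem_piFinset] at hy
    exact hQ x hx y fun j => by have := hy j; simp at this; omega
  have hcard : (Fintype.piFinset fun j => Finset.range (x j + 1)).card = ∏ j, (x j + 1) := by
    simp [Fintype.card_piFinset]
  have h1 : x i + 1 ≤ ∏ j, (x j + 1) := by
    have := Finset.single_le_prod' (s := Finset.univ) (f := fun j => x j + 1)
      (fun j _ => Nat.succ_le_succ (Nat.zero_le _)) (Finset.mem_univ i)
    simpa using this
  have h2 := Finset.card_le_card hsub
  rw [hcard, hc] at h2
  omega

theorem stmt_8 (d n : ℕ) (hd : 1 ≤ d) (hn : 1 ≤ n) :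
    (d + n - 2).choose (n - 1) ≤ numLowerSets d n := by
  classical
  set S : Set (Finset (Fin d → ℕ)) := {Q : Finset (Fin d → ℕ) | IsLowerFinset Q ∧ Q.card = n}
  have hSfin : S.Finite := by
    apply Set.Finite.subset
      ((Fintype.piFinset fun _ : Fin d => Finset.range n).powerset.finite_toSet)
    rintro Q ⟨hQ, hc⟩
    simp only [Finset.coe_powerset, Set.mem_preimage, Set.mem_powerset_iff, Finset.coe_subset,
      Finset.mem_coe, Finset.mem_powerset]
    intro x hx
    rw [Fintype.mem_piFinset]
    intro i
    simpa using lower_mem_lt Q hQ hc x hx i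
  have hcount : ∀ m : Sym (Fin d) (n - 1), ∑ i, Multiset.count i m.val = n - 1 := by
    intro m
    have h1 : ∑ i, Multiset.count i m.val = Multiset.card m.val :=
      Multiset.sum_count_eq_card fun a _ => Finset.mem_univ a
    rw [h1, m.2]
  set F : Sym (Fin d) (n - 1) → Finset (Fin d → ℕ) := fun m => stair fun i => Multiset.count i m.val
  have hFinj : Function.Injective F := by
    intro m₁ m₂ h
    have h2 := stair_inj h
    exact Subtype.ext (Multiset.ext.2 fun x => congrFun h2 x)
  have hFmem : ∀ m, F m ∈ S := by
    intro m
    refine ⟨stair_lower _, ?_⟩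
    show (stair _).card = n
    rw [stair_card, hcount m]
    omega
  have key : Fintype.card (Sym (Fin d) (n - 1)) ≤ S.ncard := by
    have hsub : ((Finset.univ.image F : Finset (Finset (Fin d → ℕ))) : Set (Finset (Fin d → ℕ)))
        ⊆ S := by
      intro Q hQ
      simp only [Finset.coe_image, Finset.coe_univ, Set.image_univ, Set.mem_range] at hQ
      obtain ⟨m, rfl⟩ := hQ
      exact hFmem m
    calc Fintype.card (Sym (Fin d) (n - 1)) = (Finset.univ.image F).card := by
          rw [Finset.card_image_of_injective _ hFinj, Finset.card_univ]
      _ = ((Finset.univ.image F : Finset (Finset (Fin d → ℕ))) : Set _).ncard := by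
          rw [Set.ncard_coe_finset]
      _ ≤ S.ncard := Set.ncard_le_ncard hsub hSfin
  have hsym : Fintype.card (Sym (Fin d) (n - 1)) = (d + n - 2).choose (n - 1) := by
    rw [Sym.card_sym_eq_choose, Fintype.card_fin]
    congr 1
    omega
  rw [numLowerSets]
  rw [hsym] at key
  exact key
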